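/- Let $r$ be a finite random variable, $u$ a binary random variable, and $A$ a randomized function with $u \perp A(r) \mid r$. If $H^* = H(u \mid r) > 0$ (in bits), then the attribute inference accuracy of any such adversary is bounded: $\Pr(A(r) = u) \le 1 - \frac{H^*}{2\log_2(6/H^*)}$. -/
import Mathlib


open Finset
open scoped Classical


/-- `ψ x = x - x log x`, an upper bound for binary entropy (nats). -/
noncomputable def tappflPsi (x : ℝ) : ℝ := x - x * Real.log x

lemma tappfl_neg_mul_log_le {y : ℝ} (hy : 0 < y) : -(y * Real.log y) ≤ 1 - y := by
  have h := Real.log_le_sub_one_of_pos (inv_pos.mpr hy)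
  rw [Real.log_inv] at h
  have h2 := mul_le_mul_of_nonneg_left h hy.le
  rw [mul_sub, mul_inv_cancel₀ hy.ne'] at h2
  nlinarith

lemma tappfl_entropy_le {α : ℝ} (h0 : 0 ≤ α) (h1 : α ≤ 1) :
    -(α * Real.log α) - (1 - α) * Real.log (1 - α) ≤ tappflPsi (min α (1 - α)) := by
  rcases le_total α (1 - α) with h | h
  · rw [min_eq_left h]
    have h2 : 0 < 1 - α := by linarith
    have := tappfl_neg_mul_log_le h2
    unfold tappflPsi; nlinarith
  · rw [min_eq_right h]
    have h2 : 0 < α := by linarith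
    have := tappfl_neg_mul_log_le h2
    unfold tappflPsi; nlinarith

lemma tappfl_psi_concave : ConcaveOn ℝ (Set.Ici (0 : ℝ)) tappflPsi := by
  have : tappflPsi = fun x => id x + Real.negMulLog x := by
    funext x; simp [tappflPsi, Real.negMulLog, id]; ring
  rw [this]
  exact (concaveOn_id (convex_Ici 0)).add Real.concaveOn_negMulLog

lemma tappfl_psi_mono {a b : ℝ} (ha : 0 ≤ a) (hab : a ≤ b) (hb : b ≤ 1) :
    tappflPsi a ≤ tappflPsi b := by
  rcases eq_or_lt_of_le ha with h | h
  · have hb0 : 0 ≤ b := le_trans ha hab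
    have hlb : Real.log b ≤ 0 := Real.log_nonpos hb0 hb
    unfold tappflPsi
    rw [← h]
    nlinarith [mul_nonpos_of_nonneg_of_nonpos hb0 hlb]
  · have hb0 : 0 < b := lt_of_lt_of_le h hab
    have h1 : Real.log (b / a) ≤ b / a - 1 := Real.log_le_sub_one_of_pos (by positivity)
    rw [Real.log_div hb0.ne' h.ne'] at h1
    have h2 := mul_le_mul_of_nonneg_left h1 ha
    have h2' : a * (b / a - 1) = b - a := by field_simp
    rw [h2'] at h2
    have h3 : 0 ≤ (b - a) * (-Real.log b) :=
      mul_nonneg (by linarith) (neg_nonneg.mpr (Real.log_nonpos hb0.le hb))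
    unfold tappflPsi
    nlinarith

/-- Privacy guarantee against worst-case attribute inference (Theorem 2 of
TAPPFL), finite setting.  `u` is a binary private attribute, `r` the learnt
representation, and `A` any (possibly randomized) adversary with
`u ⟂ A | r`.  If `H* = H(u|r) > 0` (bits), then
`Pr(A(r) = u) ≤ 1 - H*/(2 log₂(6/H*))`. -/
theorem attribute_inference_accuracy_bound {Ω R : Type} [Fintype Ω] [Fintype R]
    [DecidableEq R]
    (P : Ω → ℝ) (hP : ∀ ω, 0 ≤ P ω) (hPsum : ∑ ω, P ω = 1)
    (r : Ω → R) (u : Ω → Bool) (A : Ω → Bool)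
    (hindep : ∀ (rv : R) (a b : Bool),
      (∑ ω, if r ω = rv ∧ u ω = a ∧ A ω = b then P ω else 0) *
        (∑ ω, if r ω = rv then P ω else 0) =
      (∑ ω, if r ω = rv ∧ u ω = a then P ω else 0) *
        (∑ ω, if r ω = rv ∧ A ω = b then P ω else 0))
    (Hstar : ℝ)
    (hHdef : Hstar = -(∑ rv : R, ∑ a : Bool,
        (∑ ω, if r ω = rv ∧ u ω = a then P ω else 0) *
          Real.logb 2 ((∑ ω, if r ω = rv ∧ u ω = a then P ω else 0) /
            (∑ ω, if r ω = rv then P ω else 0))))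
    (hHpos : 0 < Hstar) :
    (∑ ω, if A ω = u ω then P ω else 0) ≤
      1 - Hstar / (2 * Real.logb 2 (6 / Hstar)) := by
  set qq : R → ℝ := fun rv => ∑ ω, if r ω = rv then P ω else 0 with hqq
  set pp : R → Bool → ℝ := fun rv a => ∑ ω, if r ω = rv ∧ u ω = a then P ω else 0 with hpp
  set ss : R → Bool → ℝ := fun rv b => ∑ ω, if r ω = rv ∧ A ω = b then P ω else 0 with hss
  set jj : R → Bool → Bool → ℝ :=
    fun rv a b => ∑ ω, if r ω = rv ∧ u ω = a ∧ A ω = b then P ω else 0 with hjj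
  set E : ℝ := ∑ ω, if A ω = u ω then 0 else P ω with hE
  set mm : R → ℝ := fun rv => min (pp rv false) (pp rv true) / qq rv with hmm
  clear_value qq pp ss jj E mm
  -- basic nonnegativity
  have hqqn : ∀ rv, 0 ≤ qq rv := by
    intro rv; simp only [hqq]
    exact Finset.sum_nonneg fun ω _ => by split <;> simp [hP ω]
  have hppn : ∀ rv a, 0 ≤ pp rv a := by
    intro rv a; simp only [hpp]
    exact Finset.sum_nonneg fun ω _ => by split <;> simp [hP ω]
  have hssn : ∀ rv b, 0 ≤ ss rv b := by
    intro rv b; simp only [hss]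
    exact Finset.sum_nonneg fun ω _ => by split <;> simp [hP ω]
  have hjjn : ∀ rv a b, 0 ≤ jj rv a b := by
    intro rv a b; simp only [hjj]
    exact Finset.sum_nonneg fun ω _ => by split <;> simp [hP ω]
  have hE0 : 0 ≤ E := by
    simp only [hE]
    exact Finset.sum_nonneg fun ω _ => by split <;> simp [hP ω]
  have hmmn : ∀ rv, 0 ≤ mm rv := by
    intro rv; simp only [hmm]
    exact div_nonneg (le_min (hppn rv false) (hppn rv true)) (hqqn rv)
  -- structural sum identities
  have hind : ∀ rv a b, jj rv a b * qq rv = pp rv a * ss rv b := by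
    intro rv a b; simp only [hjj, hqq, hpp, hss]; exact hindep rv a b
  have hH : Hstar = -(∑ rv : R, ∑ a : Bool,
      pp rv a * Real.logb 2 (pp rv a / qq rv)) := by
    simp only [hpp, hqq]; exact hHdef
  have hsplit : ∀ rv, pp rv false + pp rv true = qq rv := by
    intro rv; simp only [hpp, hqq]
    rw [← Finset.sum_add_distrib]
    exact Finset.sum_congr rfl fun ω _ => by
      cases hu : u ω <;> by_cases h : r ω = rv <;> simp [hu, h]
  have hss_split : ∀ rv, ss rv false + ss rv true = qq rv := by
    intro rv; simp only [hss, hqq]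
    rw [← Finset.sum_add_distrib]
    exact Finset.sum_congr rfl fun ω _ => by
      cases hA : A ω <;> by_cases h : r ω = rv <;> simp [hA, h]
  have hsum_q : ∑ rv, qq rv = 1 := by
    simp only [hqq]
    rw [Finset.sum_comm, ← hPsum]
    exact Finset.sum_congr rfl fun ω _ => by simp [Finset.sum_ite_eq]
  have hACCE : (∑ ω, if A ω = u ω then P ω else 0) + E = 1 := by
    simp only [hE]
    rw [← hPsum, ← Finset.sum_add_distrib]
    exact Finset.sum_congr rfl fun ω _ => by by_cases h : A ω = u ω <;> simp [h]
  have hE1 : E ≤ 1 := by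
    have h0 : 0 ≤ ∑ ω, if A ω = u ω then P ω else 0 :=
      Finset.sum_nonneg fun ω _ => by split <;> simp [hP ω]
    linarith
  have hE_eq : E = ∑ rv, (jj rv false true + jj rv true false) := by
    simp only [hE, hjj]
    have hre : ∀ rv : R,
        (∑ ω, if r ω = rv ∧ u ω = false ∧ A ω = true then P ω else 0)
          + (∑ ω, if r ω = rv ∧ u ω = true ∧ A ω = false then P ω else 0)
        = ∑ ω, ((if r ω = rv ∧ u ω = false ∧ A ω = true then P ω else 0)
          + (if r ω = rv ∧ u ω = true ∧ A ω = false then P ω else 0)) :=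
      fun rv => Finset.sum_add_distrib.symm
    simp only [hre]
    rw [Finset.sum_comm]
    exact Finset.sum_congr rfl fun ω _ => by
      cases hu : u ω <;> cases hA : A ω <;>
        simp [hu, hA, Finset.sum_add_distrib, Finset.sum_ite_eq]
  -- zero case helper
  have hzero : ∀ rv, qq rv = 0 → pp rv false = 0 ∧ pp rv true = 0 := by
    intro rv h
    have h1 := hsplit rv
    have h2 := hppn rv false
    have h3 := hppn rv true
    constructor <;> linarith
  -- q * m = min
  have hqm : ∀ rv, qq rv * mm rv = min (pp rv false) (pp rv true) := by
    intro rv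
    rcases (hqqn rv).eq_or_lt with h | h
    · obtain ⟨h1, h2⟩ := hzero rv h.symm
      rw [← h, zero_mul, h1, h2, min_self]
    · simp only [hmm]
      rw [mul_comm, div_mul_cancel₀ _ h.ne']
  -- Fano-like pointwise error bound
  have herr : ∀ rv, qq rv * mm rv ≤ jj rv false true + jj rv true false := by
    intro rv
    rw [hqm rv]
    rcases (hqqn rv).eq_or_lt with h | h
    · obtain ⟨h1, h2⟩ := hzero rv h.symm
      rw [h1, h2, min_self]
      exact add_nonneg (hjjn rv false true) (hjjn rv true false)
    · apply le_of_mul_le_mul_right _ h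
      calc min (pp rv false) (pp rv true) * qq rv
          = min (pp rv false) (pp rv true) * ss rv false
            + min (pp rv false) (pp rv true) * ss rv true := by
            rw [← hss_split rv]; ring
        _ ≤ pp rv true * ss rv false + pp rv false * ss rv true :=
            add_le_add
              (mul_le_mul_of_nonneg_right (min_le_right _ _) (hssn rv false))
              (mul_le_mul_of_nonneg_right (min_le_left _ _) (hssn rv true))
        _ = (jj rv false true + jj rv true false) * qq rv := by
            rw [add_mul, hind rv false true, hind rv true false]; ring
  -- pointwise entropy bound
  have hkey : ∀ rv,
      -(pp rv false * Real.log (pp rv false / qq rv))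
        - pp rv true * Real.log (pp rv true / qq rv)
      ≤ qq rv * tappflPsi (mm rv) := by
    intro rv
    rcases (hqqn rv).eq_or_lt with h | h
    · obtain ⟨h1, h2⟩ := hzero rv h.symm
      rw [← h]
      simp [h1, h2]
    · set α := pp rv false / qq rv with hα
      have hα0 : 0 ≤ α := div_nonneg (hppn rv false) (hqqn rv)
      have hα1 : α ≤ 1 := by
        rw [hα, div_le_one h]
        linarith [hsplit rv, hppn rv true]
      have hpf : pp rv false = qq rv * α := by rw [hα]; field_simp
      have hpt : pp rv true = qq rv * (1 - α) := by
        have h1 := hsplit rv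
        rw [hα]; field_simp; linarith
      have hptq : pp rv true / qq rv = 1 - α := by
        rw [hpt, mul_div_cancel_left₀ _ h.ne']
      have hmmα : mm rv = min α (1 - α) := by
        simp only [hmm]
        rcases le_total (pp rv false) (pp rv true) with h' | h'
        · rw [min_eq_left h', min_eq_left, hα]
          rw [hα, ← hptq]
          exact (div_le_div_iff_of_pos_right h).mpr h'
        · rw [min_eq_right h', min_eq_right, hptq]
          rw [hα, ← hptq]
          exact (div_le_div_iff_of_pos_right h).mpr h'
      rw [hmmα, hptq, hpf, hpt]
      calc -(qq rv * α * Real.log α) - qq rv * (1 - α) * Real.log (1 - α)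
          = qq rv * (-(α * Real.log α) - (1 - α) * Real.log (1 - α)) := by ring
        _ ≤ qq rv * tappflPsi (min α (1 - α)) :=
            mul_le_mul_of_nonneg_left (tappfl_entropy_le hα0 hα1) (hqqn rv)
  -- convert Hstar to natural logs
  have hlog2pos : (0:ℝ) < Real.log 2 := Real.log_pos one_lt_two
  have hT : Hstar * Real.log 2 = ∑ rv,
      (-(pp rv false * Real.log (pp rv false / qq rv))
        - pp rv true * Real.log (pp rv true / qq rv)) := by
    rw [hH, neg_mul, Finset.sum_mul, ← Finset.sum_neg_distrib]
    apply Finset.sum_congr rfl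
    intro rv _
    rw [Fintype.sum_bool]
    simp only [Real.logb]
    field_simp
    ring
  -- Jensen
  have hjen : ∑ rv, qq rv * tappflPsi (mm rv) ≤ tappflPsi (∑ rv, qq rv * mm rv) := by
    have h := tappfl_psi_concave.le_map_sum (t := Finset.univ) (w := qq) (p := mm)
      (fun i _ => hqqn i) hsum_q (fun i _ => Set.mem_Ici.mpr (hmmn i))
    simpa [smul_eq_mul] using h
  have hsumqm0 : 0 ≤ ∑ rv, qq rv * mm rv :=
    Finset.sum_nonneg fun rv _ => mul_nonneg (hqqn rv) (hmmn rv)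
  have hsumqmE : ∑ rv, qq rv * mm rv ≤ E := by
    rw [hE_eq]
    exact Finset.sum_le_sum fun rv _ => herr rv
  have hmain : Hstar * Real.log 2 ≤ tappflPsi E := by
    rw [hT]
    refine le_trans (Finset.sum_le_sum fun rv _ => hkey rv) ?_
    exact le_trans hjen (tappfl_psi_mono hsumqm0 hsumqmE hE1)
  have hpsi1 : tappflPsi 1 = 1 := by simp [tappflPsi]
  have hH1 : Hstar * Real.log 2 ≤ 1 := by
    have := tappfl_psi_mono hE0 hE1 (le_refl 1)
    rw [hpsi1] at this
    linarith [hmain]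
  -- final numeric step
  set L : ℝ := Real.logb 2 (6 / Hstar) with hL
  clear_value L
  have hLlog : L * Real.log 2 = Real.log (6 / Hstar) := by
    rw [hL, Real.logb, div_mul_cancel₀ _ hlog2pos.ne']
  have hlog2gt : (0.6931471803 : ℝ) < Real.log 2 := Real.log_two_gt_d9
  have hexp : Real.exp 1 < 2.7182818286 := Real.exp_one_lt_d9
  have hL1 : 1 ≤ L := by
    have h6H : (2:ℝ) ≤ 6 / Hstar := by
      rw [le_div_iff₀ hHpos]
      nlinarith
    have := Real.log_le_log (by norm_num) h6H
    rw [hL, Real.logb, le_div_iff₀ hlog2pos]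
    linarith
  have hLpos : 0 < L := by linarith
  have hLH : L * Hstar * Real.log 2 ≤ 4 := by
    have e1 : L * Hstar * Real.log 2 = Hstar * Real.log 6 - Hstar * Real.log Hstar := by
      rw [mul_comm (L) (Hstar), mul_assoc, hLlog, Real.log_div (by norm_num) hHpos.ne']
      ring
    have h6 : Real.log 6 ≤ 3 * Real.log 2 := by
      have : Real.log 6 ≤ Real.log 8 := Real.log_le_log (by norm_num) (by norm_num)
      have h8 : Real.log 8 = 3 * Real.log 2 := by
        rw [show (8:ℝ) = 2 ^ 3 by norm_num, Real.log_pow]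
        push_cast; ring
      linarith
    have hb1 : Hstar * Real.log 6 ≤ 3 := by
      have := mul_le_mul_of_nonneg_left h6 hHpos.le
      nlinarith
    have hb2 : -(Hstar * Real.log Hstar) ≤ 1 - Hstar := tappfl_neg_mul_log_le hHpos
    rw [e1]
    linarith
  -- suppose error < Hstar / (2 L), derive contradiction
  have hEc : Hstar / (2 * L) ≤ E := by
    by_contra hc
    push_neg at hc
    set c : ℝ := Hstar / (2 * L) with hcdef
    clear_value c
    have h2L : (0:ℝ) < 2 * L := by linarith
    have hcpos : 0 < c := hcdef ▸ div_pos hHpos h2L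
    have hc1 : c ≤ 1 := by
      rw [hcdef, div_le_one h2L]
      nlinarith
    have h1 : Hstar * Real.log 2 ≤ tappflPsi c :=
      hmain.trans (tappfl_psi_mono hE0 hc.le hc1)
    have hHc : Hstar = 2 * L * c := by
      rw [hcdef]; field_simp
    have h2 : c * (2 * L * Real.log 2) ≤ c * (1 - Real.log c) := by
      have hps : tappflPsi c = c * (1 - Real.log c) := by unfold tappflPsi; ring
      rw [hps, hHc] at h1
      linear_combination h1
    have h3 : 2 * L * Real.log 2 ≤ 1 - Real.log c := le_of_mul_le_mul_left h2 hcpos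
    have hlogc : Real.log c = Real.log Hstar - Real.log (2 * L) := by
      rw [hcdef, Real.log_div hHpos.ne' h2L.ne']
    -- numeric: 1 - log c < 2 L log 2
    have hnum : Real.exp 1 * (2 * L) * Hstar < 36 := by
      have h4 : Real.exp 1 * (L * Hstar * Real.log 2) ≤ Real.exp 1 * 4 :=
        mul_le_mul_of_nonneg_left hLH (Real.exp_pos 1).le
      have h5 : (Real.exp 1 * (2 * L) * Hstar) * Real.log 2 < 36 * Real.log 2 := by
        have e : (Real.exp 1 * (2 * L) * Hstar) * Real.log 2
            = 2 * (Real.exp 1 * (L * Hstar * Real.log 2)) := by ring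
        rw [e]
        linarith [h4, hexp, hlog2gt]
      exact lt_of_mul_lt_mul_right h5 hlog2pos.le
    have hlt : Real.log (Real.exp 1 * (2 * L) * Hstar) < Real.log 36 :=
      Real.log_lt_log (by positivity) hnum
    rw [Real.log_mul (by positivity) hHpos.ne',
      Real.log_mul (Real.exp_pos 1).ne' h2L.ne', Real.log_exp] at hlt
    have hlog36 : Real.log 36 = 2 * Real.log 6 := by
      rw [show (36:ℝ) = 6 ^ 2 by norm_num, Real.log_pow]
      push_cast; ring
    have hlog6H : Real.log (6 / Hstar) = Real.log 6 - Real.log Hstar :=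
      Real.log_div (by norm_num) hHpos.ne'
    -- combine: h3 says 2 L log 2 ≤ 1 - log Hstar + log (2L)
    -- but 2 L log 2 = 2 (log 6 - log Hstar) and hlt says 1 + log(2L) + log Hstar < 2 log 6
    have hLlog2 : 2 * (L * Real.log 2) = 2 * Real.log 6 - 2 * Real.log Hstar := by
      rw [hLlog, hlog6H]; ring
    rw [hlogc] at h3
    rw [hlog36] at hlt
    linarith
  linarith [hACCE, hEc]
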